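/- arXiv:2203.10503 — 5 statements merged into one kernel-verified Lean document; each statement's English description precedes it below -/
import Mathlib

section
/- For every natural number n, n·2^n = Σ_{k=0}^{n} (n-2k)^2 · C(n,k). -/
theorem stmt_0 (n : ℕ) :
    (n : ℤ) * 2 ^ n =
      ∑ k ∈ Finset.range (n + 1), ((n : ℤ) - 2 * k) ^ 2 * (n.choose k : ℤ) := by
  induction n with
  | zero => simp
  | succ n ih =>
    have hsum : (∑ k ∈ Finset.range (n + 1), (n.choose k : ℤ)) = 2 ^ n := by
      exact_mod_cast congrArg (Nat.cast : ℕ → ℤ) (Nat.sum_range_choose n)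
    have h1 : ∑ k ∈ Finset.range (n + 2), ((n + 1 : ℤ) - 2 * k) ^ 2 * ((n+1).choose k : ℤ)
        = ((n + 1 : ℤ))^2 + ∑ k ∈ Finset.range (n + 1),
          ((n + 1 : ℤ) - 2 * (k+1)) ^ 2 * ((n.choose k : ℤ) + (n.choose (k+1) : ℤ)) := by
      rw [Finset.sum_range_succ']
      simp [Nat.choose_succ_succ]
      ring
    have h2 : ∑ k ∈ Finset.range (n + 1),
          ((n + 1 : ℤ) - 2 * (k+1)) ^ 2 * (n.choose (k+1) : ℤ)
        = (∑ k ∈ Finset.range (n + 1), ((n + 1 : ℤ) - 2 * k) ^ 2 * (n.choose k : ℤ))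
          - ((n + 1 : ℤ))^2 := by
      have := Finset.sum_range_succ' (fun k => ((n + 1 : ℤ) - 2 * k) ^ 2 * (n.choose k : ℤ)) (n+1)
      rw [Finset.sum_range_succ] at this
      simp [Nat.choose_succ_self] at this
      rw [this]; ring
    have hr : n + 1 + 1 = n + 2 := rfl
    push_cast
    rw [hr, h1]
    have h3 : ∑ k ∈ Finset.range (n + 1),
          ((n + 1 : ℤ) - 2 * (k+1)) ^ 2 * ((n.choose k : ℤ) + (n.choose (k+1) : ℤ))
        = (∑ k ∈ Finset.range (n + 1), ((n + 1 : ℤ) - 2 * (k+1)) ^ 2 * (n.choose k : ℤ))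
          + ∑ k ∈ Finset.range (n + 1), ((n + 1 : ℤ) - 2 * (k+1)) ^ 2 * (n.choose (k+1) : ℤ) := by
      rw [← Finset.sum_add_distrib]; congr 1; ext k; ring
    rw [h3, h2]
    have h4 : (∑ k ∈ Finset.range (n + 1), ((n + 1 : ℤ) - 2 * (k+1)) ^ 2 * (n.choose k : ℤ))
          + (∑ k ∈ Finset.range (n + 1), ((n + 1 : ℤ) - 2 * k) ^ 2 * (n.choose k : ℤ))
        = 2 * (∑ k ∈ Finset.range (n + 1), ((n : ℤ) - 2 * k) ^ 2 * (n.choose k : ℤ))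
          + 2 * (∑ k ∈ Finset.range (n + 1), (n.choose k : ℤ)) := by
      rw [Finset.mul_sum, Finset.mul_sum, ← Finset.sum_add_distrib, ← Finset.sum_add_distrib]
      congr 1; ext k; ring
    have : ((n + 1 : ℤ))^2 + ((∑ k ∈ Finset.range (n + 1), ((n + 1 : ℤ) - 2 * (k+1)) ^ 2 * (n.choose k : ℤ))
        + ((∑ k ∈ Finset.range (n + 1), ((n + 1 : ℤ) - 2 * k) ^ 2 * (n.choose k : ℤ)) - ((n + 1 : ℤ))^2))
        = 2 * (∑ k ∈ Finset.range (n + 1), ((n : ℤ) - 2 * k) ^ 2 * (n.choose k : ℤ))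
          + 2 * (∑ k ∈ Finset.range (n + 1), (n.choose k : ℤ)) := by
      rw [← h4]; ring
    rw [this, ← ih, hsum]
    ring
end

section
/- For every natural number n ≥ 1, (n+1)^(n-1) = Σ_{j=1}^{n} C(n-1, n-j) · (n-j+1)^(n-j) · j^(j-2), where the term j^(j-2) for j = 1 is interpreted as 1. -/
open Polynomial Finset fwdDiff

noncomputable def Pab (m : ℕ) : Polynomial ℚ :=
  ∑ k ∈ Finset.range (m + 1),
    Polynomial.C ((m.choose k * (k + 1) ^ (k - 1) : ℕ) : ℚ) *
      (Polynomial.X - Polynomial.C (k : ℚ)) ^ (m - k)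

lemma fwdDiff_eval_poly (p : ℚ[X]) :
    Δ_[(1:ℚ)] (fun x : ℚ ↦ p.eval x) = fun x ↦ (p.comp (X + C 1) - p).eval x := by
  ext x
  simp [fwdDiff, eval_comp]

lemma iter_fwdDiff_eval_eq_zero : ∀ m : ℕ, ∀ p : ℚ[X], p.natDegree < m →
    (fwdDiff (1:ℚ))^[m] (fun x : ℚ ↦ p.eval x) = fun _ ↦ 0 := by
  intro m
  induction m with
  | zero => intro p hp; omega
  | succ m ih =>
    intro p hp
    rw [Function.iterate_succ_apply, fwdDiff_eval_poly]
    by_cases hq : p.comp (X + C 1) - p = 0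
    · rw [hq]
      simp only [eval_zero]
      exact Function.iterate_fixed (by simpa using fwdDiff_const (1:ℚ) (0:ℚ)) m
    · apply ih
      have hp0 : p ≠ 0 := by intro h; apply hq; simp [h]
      have hc0 : p.comp (X + C 1) ≠ 0 := by
        intro h
        rcases comp_eq_zero_iff.mp h with h1 | ⟨_, h2⟩
        · exact hp0 h1
        · have := congrArg natDegree h2
          rw [natDegree_X_add_C, natDegree_C] at this
          exact one_ne_zero this
      have hdeg : (p.comp (X + C 1)).degree = p.degree := by
        rw [degree_eq_natDegree hc0, degree_eq_natDegree hp0,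
          natDegree_comp, natDegree_X_add_C, mul_one]
      have hlc : (p.comp (X + C 1)).leadingCoeff = p.leadingCoeff := by
        by_cases h0 : p.natDegree = 0
        · obtain ⟨c, rfl⟩ := natDegree_eq_zero.mp h0
          simp
        · rw [leadingCoeff_comp (by rw [natDegree_X_add_C]; omega),
            (monic_X_add_C (1:ℚ)).leadingCoeff, one_pow, mul_one]
      have hlt := degree_sub_lt hdeg hc0 hlc
      rw [hdeg] at hlt
      have h2 : (p.comp (X + C 1) - p).natDegree < p.natDegree :=
        natDegree_lt_natDegree hq hlt
      omega

lemma alt_sum_pow (m : ℕ) :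
    ∑ k ∈ Finset.range (m + 2),
      (-1 : ℚ) ^ (m + 1 - k) * ((m + 1).choose k) * ((k : ℚ) + 1) ^ m = 0 := by
  have h := fwdDiff_iter_eq_sum_shift (1:ℚ)
    (fun x : ℚ ↦ (((X + C 1 : ℚ[X])) ^ m).eval x) (m + 1) 0
  rw [iter_fwdDiff_eval_eq_zero (m + 1) _
    (by rw [natDegree_pow, natDegree_X_add_C, mul_one]; omega)] at h
  have h' : (0:ℚ) = ∑ k ∈ Finset.range (m + 2),
      ((-1 : ℤ) ^ (m + 1 - k) * ((m + 1).choose k : ℤ)) •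
        (((X + C 1 : ℚ[X])) ^ m).eval (0 + k • (1:ℚ)) := h
  rw [eq_comm] at h'
  rw [← h']
  apply Finset.sum_congr rfl
  intro k hk
  simp only [eval_pow, eval_add, eval_X, eval_C, zsmul_eq_mul, nsmul_eq_mul, mul_one, zero_add]
  push_cast
  ring

lemma choose_cast_key (m k : ℕ) :
    (((m + 1).choose k * (k + 1) ^ (k - 1) : ℕ) : ℚ) * ((m + 1 - k : ℕ) : ℚ) =
      ((m + 1 : ℕ) : ℚ) * ((m.choose k * (k + 1) ^ (k - 1) : ℕ) : ℚ) := by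
  have h : (m + 1).choose k * (k + 1) ^ (k - 1) * (m + 1 - k) =
      (m + 1) * (m.choose k * (k + 1) ^ (k - 1)) := by
    calc (m + 1).choose k * (k + 1) ^ (k - 1) * (m + 1 - k)
        = ((m + 1).choose k * (m + 1 - k)) * (k + 1) ^ (k - 1) := by ring
      _ = (m.choose k * (m + 1)) * (k + 1) ^ (k - 1) := by rw [← Nat.choose_mul_succ_eq]
      _ = (m + 1) * (m.choose k * (k + 1) ^ (k - 1)) := by ring
  exact_mod_cast congrArg (Nat.cast : ℕ → ℚ) h

lemma Pab_eq : ∀ m : ℕ, Pab m = (X + C 1) ^ m := by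
  intro m
  induction m with
  | zero => simp [Pab]
  | succ m ih =>
    have hderiv : derivative (Pab (m + 1) - (X + C 1) ^ (m + 1)) = 0 := by
      rw [derivative_sub, Pab, map_sum]
      have hterm : ∀ k ∈ Finset.range (m + 2),
          derivative (C (((m + 1).choose k * (k + 1) ^ (k - 1) : ℕ) : ℚ) *
            (X - C (k : ℚ)) ^ (m + 1 - k)) =
          C ((m + 1 : ℕ) : ℚ) * (C ((m.choose k * (k + 1) ^ (k - 1) : ℕ) : ℚ) *
            (X - C (k : ℚ)) ^ (m - k)) := by
        intro k hk
        rw [Finset.mem_range] at hk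
        rw [derivative_mul, derivative_C, zero_mul, zero_add, derivative_pow,
          derivative_sub, derivative_X, derivative_C, sub_zero, mul_one]
        rcases Nat.lt_or_ge k (m + 1) with hkm | hkm
        · have e1 : m + 1 - k - 1 = m - k := by omega
          rw [e1, ← mul_assoc, ← mul_assoc, ← C_mul, ← C_mul]
          congr 2
          · rw [show ((m + 1 - k : ℕ) : ℚ) = ((m + 1 - k : ℕ) : ℚ) from rfl]
            exact_mod_cast choose_cast_key m k
        · have e0 : k = m + 1 := by omega
          subst e0
          simp
      rw [Finset.sum_congr rfl hterm, ← Finset.mul_sum]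
      rw [show Finset.range (m + 2) = Finset.range (m + 1 + 1) from rfl,
        Finset.sum_range_succ]
      have hlast : C ((m.choose (m + 1) * (m + 1 + 1) ^ (m + 1 - 1) : ℕ) : ℚ) *
          (X - C ((m + 1 : ℕ) : ℚ)) ^ (m - (m + 1)) = 0 := by
        rw [Nat.choose_succ_self]
        simp
      rw [hlast, add_zero, ← Pab, ih, derivative_pow, derivative_add, derivative_X,
        derivative_C, add_zero, mul_one]
      push_cast
      ring
    obtain ⟨c, hc⟩ : ∃ c, Pab (m + 1) - (X + C 1) ^ (m + 1) = C c :=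
      ⟨_, eq_C_of_derivative_eq_zero hderiv⟩
    have heval : (Pab (m + 1)).eval (-1) = 0 := by
      rw [Pab, eval_finset_sum]
      have : ∀ k ∈ Finset.range (m + 2),
          (C (((m + 1).choose k * (k + 1) ^ (k - 1) : ℕ) : ℚ) *
            (X - C (k : ℚ)) ^ (m + 1 - k)).eval (-1) =
          (-1 : ℚ) ^ (m + 1 - k) * ((m + 1).choose k) * ((k : ℚ) + 1) ^ m := by
        intro k hk
        rw [Finset.mem_range] at hk
        simp only [eval_mul, eval_pow, eval_sub, eval_X, eval_C]
        have e1 : (-1 - (k : ℚ)) = -((k : ℚ) + 1) := by ring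
        rw [e1, neg_pow]
        have e2 : ((k : ℚ) + 1) ^ (k - 1) * ((k : ℚ) + 1) ^ (m + 1 - k) =
            ((k : ℚ) + 1) ^ m := by
          rcases Nat.eq_zero_or_pos k with rfl | hk0
          · simp
          · rw [← pow_add]
            congr 1
            omega
        push_cast
        calc ((m + 1).choose k : ℚ) * (((k : ℚ) + 1) ^ (k - 1)) *
              ((-1 : ℚ) ^ (m + 1 - k) * ((k : ℚ) + 1) ^ (m + 1 - k))
            = (-1 : ℚ) ^ (m + 1 - k) * ((m + 1).choose k) *
              (((k : ℚ) + 1) ^ (k - 1) * ((k : ℚ) + 1) ^ (m + 1 - k)) := by ring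
          _ = (-1 : ℚ) ^ (m + 1 - k) * ((m + 1).choose k) * ((k : ℚ) + 1) ^ m := by rw [e2]
      rw [Finset.sum_congr rfl this]
      exact alt_sum_pow m
    have hc0 : c = 0 := by
      have := congrArg (Polynomial.eval (-1 : ℚ)) hc
      simp only [eval_sub, eval_pow, eval_add, eval_X, eval_C, eval_C] at this
      rw [heval] at this
      simpa using this.symm
    rw [hc0, C_0] at hc
    linear_combination (norm := ring_nf) hc

theorem stmt_2 (n : ℕ) (hn : 1 ≤ n) :
    (n + 1) ^ (n - 1) =
      ∑ j ∈ Finset.Icc 1 n,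
        (n - 1).choose (n - j) * (n - j + 1) ^ (n - j) * j ^ (j - 2) := by
  obtain ⟨m, rfl⟩ : ∃ m, n = m + 1 := ⟨n - 1, by omega⟩
  have hQ : ((m + 2 : ℕ) : ℚ) ^ m =
      ∑ k ∈ Finset.range (m + 1),
        ((m.choose k * (k + 1) ^ (k - 1) : ℕ) : ℚ) * (((m + 1 - k : ℕ)) : ℚ) ^ (m - k) := by
    have h := congrArg (Polynomial.eval ((m : ℚ) + 1)) (Pab_eq m)
    rw [Pab, eval_finset_sum, eval_pow, eval_add, eval_X, eval_C] at h
    rw [show ((m + 2 : ℕ) : ℚ) = (m : ℚ) + 1 + 1 by push_cast; ring, ← h]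
    apply Finset.sum_congr rfl
    intro k hk
    rw [Finset.mem_range] at hk
    simp only [eval_mul, eval_pow, eval_sub, eval_X, eval_C]
    congr 2
    push_cast [show (k : ℚ) ≤ (m : ℚ) from by exact_mod_cast Nat.le_of_lt_succ hk]
    rw [Nat.cast_sub (by omega)]
    push_cast
    ring
  have hN : (m + 2) ^ m =
      ∑ k ∈ Finset.range (m + 1),
        m.choose k * (k + 1) ^ (k - 1) * (m + 1 - k) ^ (m - k) := by
    have : (((m + 2) ^ m : ℕ) : ℚ) = ((∑ k ∈ Finset.range (m + 1),
        m.choose k * (k + 1) ^ (k - 1) * (m + 1 - k) ^ (m - k) : ℕ) : ℚ) := by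
      push_cast at hQ ⊢
      convert hQ using 2
    exact_mod_cast this
  simp only [Nat.add_sub_cancel]
  rw [show m + 1 + 1 = m + 2 from rfl, hN]
  rw [eq_comm]
  apply Finset.sum_nbij' (i := fun j => j - 1) (j := fun k => k + 1)
  · intro j hj
    rw [Finset.mem_Icc] at hj
    rw [Finset.mem_range]
    omega
  · intro k hk
    rw [Finset.mem_range] at hk
    rw [Finset.mem_Icc]
    omega
  · intro j hj
    rw [Finset.mem_Icc] at hj
    omega
  · intro k hk
    omega
  · intro j hj
    rw [Finset.mem_Icc] at hj
    obtain ⟨k, rfl⟩ : ∃ k, j = k + 1 := ⟨j - 1, by omega⟩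
    have hk : k ≤ m := by omega
    simp only [Nat.add_sub_cancel]
    rw [show m + 1 - (k + 1) = m - k by omega,
      show (k + 1) - 2 = k - 1 by omega,
      Nat.choose_symm hk,
      show m - k + 1 = m + 1 - k by omega]
    ring
end

section
/- Let d be a positive rational, N₁, N₂ rationals, b = 4N₂/d, and define A(n) = (1/4)·N₁·b^n·(n + 1/2)^(n-2) and B(n) = N₂·b^n·(n+1)^(n-2) (rational zpow for small n). Then for every n ≥ 1, with m = 2n+1: m·d·A(n) = 2·Σ_{j=1}^{n} C(n-1, n-j)·j·(m-2j)^2·A(n-j)·B(j-1). -/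
open Finset

/-- term of Abel's first identity -/
def tA (x y : ℚ) (n k : ℕ) : ℚ :=
  (n.choose k : ℚ) * (x * (x + (k : ℚ)) ^ ((k : ℤ) - 1)) * (y + ((n - k : ℕ) : ℚ)) ^ (n - k)

/-- term of Abel's second identity -/
def tI (x y : ℚ) (n k : ℕ) : ℚ :=
  (n.choose k : ℚ) * (x * (x + (k : ℚ)) ^ ((k : ℤ) - 1)) *
    (y * (y + ((n - k : ℕ) : ℚ)) ^ (((n - k : ℕ) : ℤ) - 1))

lemma step_I (n : ℕ)
    (IH : ∀ x y : ℚ, 0 < x → 0 < y →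
      ∑ k ∈ Finset.range (n + 1), tA x y n k = (x + y + (n : ℚ)) ^ n) :
    ∀ x y : ℚ, 0 < x → 0 < y →
      ∑ k ∈ Finset.range (n + 2), tI x y (n + 1) k
        = (x + y) * (x + y + ((n : ℚ) + 1)) ^ n := by
  intro x y hx hy
  set P : ℕ → ℚ := fun k =>
    (x * (x + ((k : ℚ) + 1)) ^ k) * (y * (y + ((n - k : ℕ) : ℚ)) ^ (((n - k : ℕ) : ℤ) - 1))
    with hP
  have pascal : ∀ k ∈ Finset.range (n + 1),
      tI x y (n + 1) (k + 1) = (n.choose k : ℚ) * P k + (n.choose (k + 1) : ℚ) * P k := by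
    intro k hk
    have hk' : k ≤ n := by simpa using Nat.lt_succ_iff.mp (Finset.mem_range.mp hk)
    simp only [tI, hP, Nat.choose_succ_succ, Nat.succ_sub_succ]
    have e1 : ((k + 1 : ℕ) : ℤ) - 1 = (k : ℤ) := by push_cast; ring
    have e2 : (x + ((k + 1 : ℕ) : ℚ)) = x + ((k : ℚ) + 1) := by push_cast; ring
    rw [e1, e2, zpow_natCast]
    push_cast
    ring
  have claimA : (∑ k ∈ Finset.range (n + 1), (n.choose (k + 1) : ℚ) * P k)
      + tI x y (n + 1) 0
      = y * (x + y + ((n : ℚ) + 1)) ^ n := by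
    have hT := IH x (y + 1) hx (by linarith)
    have hsum : ∑ k ∈ Finset.range (n + 1), y * tA x (y + 1) n k
        = y * (x + y + ((n : ℚ) + 1)) ^ n := by
      rw [← Finset.mul_sum, hT]; ring_nf
    rw [← hsum, Finset.sum_range_succ' (fun k => y * tA x (y + 1) n k) n]
    have h0 : tI x y (n + 1) 0 = y * tA x (y + 1) n 0 := by
      simp only [tI, tA, Nat.choose_zero_right, Nat.sub_zero, Nat.cast_zero, add_zero,
        Nat.cast_one, Nat.cast_add]
      have : (x : ℚ) ^ ((0 : ℤ) - 1) = x⁻¹ := by norm_num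
      rw [this, mul_inv_cancel₀ hx.ne', one_mul, one_mul]
      have e : ((n : ℤ)) + 1 - 1 = (n : ℤ) := by ring
      rw [e, zpow_natCast]
      ring_nf
    have hlast : ∑ k ∈ Finset.range (n + 1), (n.choose (k + 1) : ℚ) * P k
        = ∑ k ∈ Finset.range n, (n.choose (k + 1) : ℚ) * P k := by
      rw [Finset.sum_range_succ, Nat.choose_succ_self]
      simp
    rw [h0, hlast]
    congr 1
    apply Finset.sum_congr rfl
    intro k hk
    have hk' : k < n := Finset.mem_range.mp hk
    simp only [tA, hP]
    have e1 : ((k + 1 : ℕ) : ℤ) - 1 = (k : ℤ) := by push_cast; ring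
    have e2 : (x + ((k + 1 : ℕ) : ℚ)) = x + ((k : ℚ) + 1) := by push_cast; ring
    have e3 : (y + 1) + ((n - (k + 1) : ℕ) : ℚ) = y + ((n - k : ℕ) : ℚ) := by
      have : (n - k : ℕ) = (n - (k + 1) : ℕ) + 1 := by omega
      rw [this]; push_cast; ring
    have e4 : ((n - k : ℕ) : ℤ) - 1 = ((n - (k + 1) : ℕ) : ℤ) := by
      have : (n - k : ℕ) = (n - (k + 1) : ℕ) + 1 := by omega
      rw [this]; push_cast; ring
    rw [e1, e2, e3, e4, zpow_natCast, zpow_natCast]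
    ring
  have claimB : ∑ k ∈ Finset.range (n + 1), (n.choose k : ℚ) * P k
      = x * (x + y + ((n : ℚ) + 1)) ^ n := by
    have hT := IH y (x + 1) hy (by linarith)
    have hsum : ∑ k ∈ Finset.range (n + 1), x * tA y (x + 1) n k
        = x * (x + y + ((n : ℚ) + 1)) ^ n := by
      rw [← Finset.mul_sum, hT]; ring_nf
    rw [← hsum, ← Finset.sum_range_reflect (fun k => (n.choose k : ℚ) * P k) (n + 1)]
    apply Finset.sum_congr rfl
    intro j hj
    have hj' : j ≤ n := by simpa using Nat.lt_succ_iff.mp (Finset.mem_range.mp hj)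
    have hidx : n + 1 - 1 - j = n - j := by omega
    simp only [hidx, tA, hP]
    have e0 : (n.choose (n - j) : ℚ) = (n.choose j : ℚ) := by
      rw [Nat.choose_symm hj']
    have e1 : (n - (n - j) : ℕ) = j := by omega
    rw [e0, e1]
    have e2 : (x + 1) + ((n - j : ℕ) : ℚ) = x + (((n - j : ℕ) : ℚ) + 1) := by ring
    rw [e2]
    ring
  calc ∑ k ∈ Finset.range (n + 2), tI x y (n + 1) k
      = (∑ k ∈ Finset.range (n + 1), tI x y (n + 1) (k + 1)) + tI x y (n + 1) 0 :=
        Finset.sum_range_succ' _ _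
    _ = (∑ k ∈ Finset.range (n + 1),
          ((n.choose k : ℚ) * P k + (n.choose (k + 1) : ℚ) * P k)) + tI x y (n + 1) 0 := by
        rw [Finset.sum_congr rfl pascal]
    _ = (∑ k ∈ Finset.range (n + 1), (n.choose k : ℚ) * P k)
        + ((∑ k ∈ Finset.range (n + 1), (n.choose (k + 1) : ℚ) * P k) + tI x y (n + 1) 0) := by
        rw [Finset.sum_add_distrib]; ring
    _ = x * (x + y + ((n : ℚ) + 1)) ^ n + y * (x + y + ((n : ℚ) + 1)) ^ n := by
        rw [claimA, claimB]
    _ = (x + y) * (x + y + ((n : ℚ) + 1)) ^ n := by ring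

/-- Abel's binomial identity for positive rationals. -/
lemma abelT : ∀ (n : ℕ) (x y : ℚ), 0 < x → 0 < y →
    ∑ k ∈ Finset.range (n + 1), tA x y n k = (x + y + (n : ℚ)) ^ n := by
  intro n
  induction n with
  | zero =>
    intro x y hx hy
    simp [tA, zpow_neg, mul_inv_cancel₀ hx.ne']
  | succ n IH =>
    intro x y hx hy
    have hI := step_I n IH x y hx hy
    have split : ∀ k ∈ Finset.range (n + 2),
        tA x y (n + 1) k = tI x y (n + 1) k +
          ((n + 1).choose k : ℚ) * (x * (x + (k : ℚ)) ^ ((k : ℤ) - 1)) *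
            (((n + 1 - k : ℕ) : ℚ) * (y + ((n + 1 - k : ℕ) : ℚ)) ^ (((n + 1 - k : ℕ) : ℤ) - 1)) := by
      intro k hk
      simp only [tA, tI]
      set m : ℕ := n + 1 - k with hm
      have hbase : (0 : ℚ) < y + (m : ℚ) := by positivity
      have hz : (y + (m : ℚ)) ^ m = (y + (m : ℚ)) ^ ((m : ℤ)) := (zpow_natCast _ m).symm
      rw [hz, show ((m : ℤ)) = ((m : ℤ) - 1) + 1 by ring, zpow_add_one₀ hbase.ne']
      ring
    rw [Finset.sum_congr rfl split, Finset.sum_add_distrib, hI]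
    have claimC : ∑ k ∈ Finset.range (n + 2),
        ((n + 1).choose k : ℚ) * (x * (x + (k : ℚ)) ^ ((k : ℤ) - 1)) *
          (((n + 1 - k : ℕ) : ℚ) * (y + ((n + 1 - k : ℕ) : ℚ)) ^ (((n + 1 - k : ℕ) : ℤ) - 1))
        = ((n : ℚ) + 1) * (x + y + ((n : ℚ) + 1)) ^ n := by
      have hT := IH x (y + 1) hx (by linarith)
      have hsum : ∑ k ∈ Finset.range (n + 1), ((n : ℚ) + 1) * tA x (y + 1) n k
          = ((n : ℚ) + 1) * (x + y + ((n : ℚ) + 1)) ^ n := by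
        rw [← Finset.mul_sum, hT]; ring_nf
      rw [Finset.sum_range_succ, ← hsum]
      have hzero : ((n + 1).choose (n + 1) : ℚ) *
          (x * (x + ((n + 1 : ℕ) : ℚ)) ^ (((n + 1 : ℕ) : ℤ) - 1)) *
          (((n + 1 - (n + 1) : ℕ) : ℚ) *
            (y + ((n + 1 - (n + 1) : ℕ) : ℚ)) ^ (((n + 1 - (n + 1) : ℕ) : ℤ) - 1)) = 0 := by
        simp
      rw [hzero, add_zero]
      apply Finset.sum_congr rfl
      intro k hk
      have hk' : k ≤ n := by simpa using Nat.lt_succ_iff.mp (Finset.mem_range.mp hk)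
      simp only [tA]
      have echoose : ((n + 1).choose k : ℚ) * ((n + 1 - k : ℕ) : ℚ)
          = ((n : ℚ) + 1) * (n.choose k : ℚ) := by
        have h := Nat.choose_mul_succ_eq n k
        have h' : (n.choose k : ℚ) * ((n : ℚ) + 1)
            = ((n + 1).choose k : ℚ) * ((n + 1 - k : ℕ) : ℚ) := by exact_mod_cast h
        linear_combination -1 * h'
      have e3 : (y + 1) + ((n - k : ℕ) : ℚ) = y + ((n + 1 - k : ℕ) : ℚ) := by
        have : (n + 1 - k : ℕ) = (n - k : ℕ) + 1 := by omega
        rw [this]; push_cast; ring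
      have e4 : ((n + 1 - k : ℕ) : ℤ) - 1 = ((n - k : ℕ) : ℤ) := by
        have : (n + 1 - k : ℕ) = (n - k : ℕ) + 1 := by omega
        rw [this]; push_cast; ring
      rw [e4, zpow_natCast, ← e3]
      calc ((n + 1).choose k : ℚ) * (x * (x + (k : ℚ)) ^ ((k : ℤ) - 1)) *
            (((n + 1 - k : ℕ) : ℚ) * ((y + 1) + ((n - k : ℕ) : ℚ)) ^ (n - k))
          = (((n + 1).choose k : ℚ) * ((n + 1 - k : ℕ) : ℚ)) *
            ((x * (x + (k : ℚ)) ^ ((k : ℤ) - 1)) * ((y + 1) + ((n - k : ℕ) : ℚ)) ^ (n - k)) := by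
            ring
        _ = ((n : ℚ) + 1) * ((n.choose k : ℚ) * (x * (x + (k : ℚ)) ^ ((k : ℤ) - 1)) *
              ((y + 1) + ((n - k : ℕ) : ℚ)) ^ (n - k)) := by rw [echoose]; ring
    rw [claimC]
    have : (x + y + ((n + 1 : ℕ) : ℚ)) = x + y + ((n : ℚ) + 1) := by push_cast; ring
    rw [this]
    ring

/-- The explicit formulas `A n = (1/4)·N₁·b^n·(n+1/2)^(n-2)` and
`B n = N₂·b^n·(n+1)^(n-2)` solve the odd-index recursion with `m = 2n+1`. -/
theorem stmt_5 (d N₁ N₂ b : ℚ) (hd : 0 < d) (hb : b = 4 * N₂ / d)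
    (A B : ℕ → ℚ)
    (hA : ∀ k : ℕ, A k = (1 / 4) * N₁ * b ^ k * ((k : ℚ) + 1 / 2) ^ ((k : ℤ) - 2))
    (hB : ∀ k : ℕ, B k = N₂ * b ^ k * ((k : ℚ) + 1) ^ ((k : ℤ) - 2))
    (n : ℕ) (hn : 1 ≤ n) :
    (2 * (n : ℚ) + 1) * d * A n =
      2 * ∑ j ∈ Finset.Icc 1 n,
        ((n - 1).choose (n - j) : ℚ) * (j : ℚ) * (2 * (n : ℚ) + 1 - 2 * (j : ℚ)) ^ 2 *
          A (n - j) * B (j - 1) := by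
  obtain ⟨m, rfl⟩ : ∃ m, n = m + 1 := ⟨n - 1, by omega⟩
  have hdb : d * b = 4 * N₂ := by rw [hb]; field_simp
  have termwise : ∀ i ∈ Finset.range (m + 1),
      ((m + 1 - 1).choose (m + 1 - (1 + i)) : ℚ) * ((1 + i : ℕ) : ℚ) *
          (2 * ((m + 1 : ℕ) : ℚ) + 1 - 2 * ((1 + i : ℕ) : ℚ)) ^ 2 *
          A (m + 1 - (1 + i)) * B (1 + i - 1)
        = N₁ * N₂ * b ^ m * tA 1 (1/2) m i := by
    intro i hi
    have him : i ≤ m := Nat.lt_succ_iff.mp (Finset.mem_range.mp hi)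
    have i1 : m + 1 - (1 + i) = m - i := by omega
    have i2 : 1 + i - 1 = i := by omega
    have i3 : m + 1 - 1 = m := rfl
    rw [i1, i2, i3, hA (m - i), hB i, Nat.choose_symm him]
    simp only [tA]
    have hne1 : ((i : ℚ) + 1) ≠ 0 := by positivity
    have hmi : ((m : ℚ) - i) ≥ 0 := by
      have : (i : ℚ) ≤ (m : ℚ) := by exact_mod_cast him
      linarith
    have hne2 : ((m : ℚ) - i + 1/2) ≠ 0 := by linarith
    push_cast [Nat.cast_sub him]
    have hne1' : (1 + (i : ℚ)) ≠ 0 := by positivity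
    have hne2' : (1/2 + ((m : ℚ) - i)) ≠ 0 := by linarith
    have z1 : (1 + (i : ℚ)) ^ ((i : ℤ) - 1) = (1 + (i : ℚ)) ^ ((i : ℤ) - 2) * (1 + (i : ℚ)) := by
      rw [← zpow_add_one₀ hne1']; congr 1; ring
    have z2 : (1/2 + ((m : ℚ) - i)) ^ (m - i)
        = (1/2 + ((m : ℚ) - i)) ^ ((m : ℤ) - i - 2) * (1/2 + ((m : ℚ) - i)) ^ 2 := by
      rw [← zpow_natCast (1/2 + ((m : ℚ) - i)) (m - i),
        show ((m - i : ℕ) : ℤ) = ((m : ℤ) - i - 2) + 2 by push_cast [Nat.cast_sub him]; ring,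
        zpow_add₀ hne2', show ((2 : ℤ)) = ((2 : ℕ) : ℤ) from rfl, zpow_natCast]
    have z3 : (b : ℚ) ^ m = b ^ (m - i) * b ^ i := by
      rw [← pow_add]; congr 1; omega
    rw [z1, z2, z3]
    ring
  rw [← Finset.Ico_add_one_right_eq_Icc, Finset.sum_Ico_eq_sum_range]
  simp only [show m + 1 + 1 - 1 = m + 1 from rfl]
  rw [Finset.sum_congr rfl termwise, ← Finset.mul_sum,
    abelT m 1 (1/2) one_pos (by norm_num), hA (m + 1)]
  have hne : ((m : ℚ) + 1 + 1/2) ≠ 0 := by positivity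
  have w : ((m : ℚ) + 1 + 1/2) ^ ((m : ℤ) + 1 - 2) * ((m : ℚ) + 1 + 1/2)
      = (1 + 1/2 + (m : ℚ)) ^ m := by
    rw [← zpow_add_one₀ hne, show (m : ℤ) + 1 - 2 + 1 = ((m : ℕ) : ℤ) by ring, zpow_natCast]
    congr 1
    ring
  push_cast
  linear_combination ((1/4) * (2 * (m : ℚ) + 3) * N₁ * b ^ m *
      ((m : ℚ) + 1 + 1/2) ^ ((m : ℤ) + 1 - 2)) * hdb + (2 * N₁ * N₂ * b ^ m) * w
end

section
/- For the tree function T(x) = Σ_{n≥1} n^{n-1} x^n / n! regarded as a formal power series over ℚ, the identity Σ_{n≥1} n^{n-2} x^{n-1}/n! = (1/x)(T(x) - T(x)²/2) holds; equivalently, x·Σ_{n≥1} n^{n-2} x^{n-1}/n! = T(x) - T(x)²/2 as formal power series. -/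
open PowerSeries

section helpers
open Polynomial Finset

lemma fd : ∀ (n : ℕ) (p : Polynomial ℚ), (p = 0 ∨ p.natDegree < n) →
    ∑ k ∈ range (n+1), (-1:ℚ)^k * (n.choose k) * p.eval (k:ℚ) = 0 := by
  intro n
  induction n with
  | zero =>
    rintro p (rfl | h)
    · simp
    · omega
  | succ n ih =>
    intro p hp
    set q : Polynomial ℚ := p.comp (Polynomial.X + Polynomial.C 1) - p with hq
    have hqe : ∀ k : ℕ, q.eval (k:ℚ) = p.eval ((k:ℚ)+1) - p.eval (k:ℚ) := by
      intro k; simp [hq, eval_comp]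
    have hqd : q = 0 ∨ q.natDegree < n := by
      rcases hp with rfl | hp
      · left; simp [hq]
      rcases Nat.eq_zero_or_pos p.natDegree with h0 | h0
      · left
        rw [hq, Polynomial.eq_C_of_natDegree_eq_zero h0]
        simp
      · right
        have hp0 : p ≠ 0 := fun h => by simp [h] at h0
        have hX1 : (Polynomial.X + Polynomial.C (1:ℚ)).natDegree = 1 := Polynomial.natDegree_X_add_C 1
        have hcomp_lc : (p.comp (Polynomial.X + Polynomial.C 1)).leadingCoeff = p.leadingCoeff := by
          rw [Polynomial.leadingCoeff_comp (by rw [hX1]; norm_num)]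
          rw [Polynomial.leadingCoeff_X_add_C, one_pow, mul_one]
        have hcomp0 : p.comp (Polynomial.X + Polynomial.C 1) ≠ 0 := by
          intro h
          rw [h] at hcomp_lc
          exact hp0 (Polynomial.leadingCoeff_eq_zero.mp hcomp_lc.symm)
        have hnd : (p.comp (Polynomial.X + Polynomial.C 1)).natDegree = p.natDegree := by
          rw [Polynomial.natDegree_comp, hX1, mul_one]
        have hdeg : (p.comp (Polynomial.X + Polynomial.C 1)).degree = p.degree := by
          rw [Polynomial.degree_eq_natDegree hcomp0, Polynomial.degree_eq_natDegree hp0, hnd]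
        have hlt : q.degree < p.degree := by
          have := Polynomial.degree_sub_lt hdeg hcomp0 hcomp_lc
          rwa [hdeg] at this
        have : q.natDegree < p.natDegree := by
          rcases eq_or_ne q 0 with hq0 | hq0
          · rw [hq0]; simpa using h0
          · exact Polynomial.natDegree_lt_natDegree hq0 hlt
        omega
    have hIH := ih q hqd
    rw [Finset.sum_range_succ']
    have hsplit : (∑ k ∈ range (n+1),
          (-1:ℚ)^(k+1) * (((n+1).choose (k+1) : ℕ)) * p.eval (((k+1:ℕ)):ℚ))
        = (∑ k ∈ range (n+1), (-1:ℚ)^(k+1) * (n.choose k) * p.eval ((k:ℚ)+1))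
          + (∑ k ∈ range (n+1), (-1:ℚ)^(k+1) * (n.choose (k+1)) * p.eval ((k:ℚ)+1)) := by
      rw [← Finset.sum_add_distrib]
      refine Finset.sum_congr rfl (fun k _ => ?_)
      rw [Nat.choose_succ_succ]
      push_cast
      ring
    have e2 : (∑ k ∈ range (n+1), (-1:ℚ)^(k+1) * (n.choose (k+1)) * p.eval ((k:ℚ)+1))
        + (-1:ℚ)^0 * (((n+1).choose 0 : ℕ)) * p.eval ((0:ℕ):ℚ)
        = ∑ k ∈ range (n+1), (-1:ℚ)^k * (n.choose k) * p.eval (k:ℚ) := by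
      have := Finset.sum_range_succ' (fun k => (-1:ℚ)^k * (n.choose k) * p.eval (k:ℚ)) (n+1)
      rw [Finset.sum_range_succ] at this
      simp only [Nat.choose_succ_self, Nat.cast_zero, mul_zero, zero_mul, add_zero] at this
      push_cast [Nat.choose_zero_right] at this ⊢
      linear_combination -this
    push_cast at hsplit e2 ⊢
    rw [hsplit, add_assoc, e2]
    have : (∑ k ∈ range (n+1), (-1:ℚ)^(k+1) * (n.choose k) * p.eval ((k:ℚ)+1))
        + (∑ k ∈ range (n+1), (-1:ℚ)^k * (n.choose k) * p.eval (k:ℚ))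
        = - ∑ k ∈ range (n+1), (-1:ℚ)^k * (n.choose k) * q.eval (k:ℚ) := by
      rw [← Finset.sum_neg_distrib, ← Finset.sum_add_distrib]
      refine Finset.sum_congr rfl (fun k _ => ?_)
      rw [hqe k]
      ring
    rw [this, hIH, neg_zero]

lemma chooseh (M k : ℕ) : (M+1).choose (k+1) * (M+1-(k+1)) = (M+1) * M.choose (k+1) := by
  have h1 := Nat.choose_succ_right_eq (M+1) (k+1)
  have h2 := Nat.add_one_mul_choose_eq M (k+1)
  omega

lemma key' : ∀ (n : ℕ) (c : ℚ),
    ∑ k ∈ range (n+1), Polynomial.C ((((n+1).choose (k+1) : ℕ) : ℚ) * ((k:ℚ)+1)^k)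
        * (Polynomial.X + Polynomial.C (((n-k : ℕ) : ℚ) + c))^(n-k)
      = Polynomial.C (((n+1:ℕ) : ℚ)) * (Polynomial.X + Polynomial.C ((((n+1:ℕ)) : ℚ) + c))^n := by
  intro n
  induction n with
  | zero => intro c; simp
  | succ n ih =>
    intro c
    set L : Polynomial ℚ := ∑ k ∈ range (n+2),
        Polynomial.C ((((n+2).choose (k+1) : ℕ) : ℚ) * ((k:ℚ)+1)^k)
          * (Polynomial.X + Polynomial.C (((n+1-k : ℕ) : ℚ) + c))^(n+1-k) with hL
    set R : Polynomial ℚ := Polynomial.C (((n+2:ℕ) : ℚ))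
        * (Polynomial.X + Polynomial.C ((((n+2:ℕ)) : ℚ) + c))^(n+1) with hR
    have hderiv : Polynomial.derivative (L - R) = 0 := by
      have hdL : Polynomial.derivative L
          = Polynomial.C (((n+2:ℕ):ℚ)) * (Polynomial.C (((n+1:ℕ):ℚ))
              * (Polynomial.X + Polynomial.C ((((n+2:ℕ)):ℚ) + c))^n) := by
        rw [hL, Polynomial.derivative_sum]
        have e1 : ∀ k ∈ range (n+2),
            Polynomial.derivative (Polynomial.C ((((n+2).choose (k+1) : ℕ) : ℚ) * ((k:ℚ)+1)^k)
              * (Polynomial.X + Polynomial.C (((n+1-k : ℕ) : ℚ) + c))^(n+1-k))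
            = Polynomial.C ((((n+2).choose (k+1) : ℕ) : ℚ) * ((k:ℚ)+1)^k * ((n+1-k : ℕ) : ℚ))
              * (Polynomial.X + Polynomial.C (((n+1-k : ℕ) : ℚ) + c))^(n-k) := by
          intro k hk
          rw [Finset.mem_range] at hk
          have he : n+1-k-1 = n-k := by omega
          rw [Polynomial.derivative_C_mul, Polynomial.derivative_X_add_C_pow, he]
          simp only [map_mul]
          ring
        rw [Finset.sum_congr rfl e1, Finset.sum_range_succ]
        simp only [Nat.sub_self, Nat.cast_zero, mul_zero, map_zero, zero_mul, add_zero]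
        have e2 : ∀ k ∈ range (n+1),
            Polynomial.C ((((n+2).choose (k+1) : ℕ) : ℚ) * ((k:ℚ)+1)^k * ((n+1-k : ℕ) : ℚ))
              * (Polynomial.X + Polynomial.C (((n+1-k : ℕ) : ℚ) + c))^(n-k)
            = Polynomial.C (((n+2:ℕ):ℚ)) *
              (Polynomial.C ((((n+1).choose (k+1) : ℕ) : ℚ) * ((k:ℚ)+1)^k)
                * (Polynomial.X + Polynomial.C ((((n-k : ℕ) : ℚ)) + (c+1)))^(n-k)) := by
          intro k hk
          rw [Finset.mem_range] at hk
          have hk' : k ≤ n := by omega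
          have hcn : (n+2).choose (k+1) * (n+1-k) = (n+2) * (n+1).choose (k+1) := by
            have := chooseh (n+1) k
            have h2 : n+1+1-(k+1) = n+1-k := by omega
            rw [h2] at this
            convert this using 2 <;> omega
          have hc : (((n+2).choose (k+1) : ℕ) : ℚ) * ((n+1-k : ℕ) : ℚ)
              = (((n+2:ℕ)):ℚ) * (((n+1).choose (k+1) : ℕ) : ℚ) := by
            exact_mod_cast congrArg (Nat.cast : ℕ → ℚ) hcn
          have hb : ((n+1-k : ℕ) : ℚ) = ((n-k : ℕ) : ℚ) + 1 := by
            have : n+1-k = (n-k)+1 := by omega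
            rw [this]; push_cast; ring
          have hbase : (((n+1-k : ℕ) : ℚ) + c) = (((n-k : ℕ) : ℚ)) + (c+1) := by
            rw [hb]; ring
          rw [hbase]
          rw [show (((n+2).choose (k+1) : ℕ) : ℚ) * ((k:ℚ)+1)^k * ((n+1-k : ℕ) : ℚ)
            = (((n+2:ℕ)):ℚ) * ((((n+1).choose (k+1) : ℕ) : ℚ) * ((k:ℚ)+1)^k) from by
              linear_combination ((k:ℚ)+1)^k * hc]
          simp only [map_mul]
          ring
        rw [Finset.sum_congr rfl e2, ← Finset.mul_sum, ih (c+1)]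
        have : ((((n+1:ℕ)) : ℚ) + (c+1)) = ((((n+2:ℕ)) : ℚ) + c) := by push_cast; ring
        rw [this]
      have hdR : Polynomial.derivative R
          = Polynomial.C (((n+2:ℕ):ℚ)) * (Polynomial.C (((n+1:ℕ):ℚ))
              * (Polynomial.X + Polynomial.C ((((n+2:ℕ)):ℚ) + c))^n) := by
        rw [hR, Polynomial.derivative_C_mul, Polynomial.derivative_X_add_C_pow]
        push_cast
        ring
      rw [Polynomial.derivative_sub, hdL, hdR, sub_self]
    have hconst : L - R = Polynomial.C ((L - R).coeff 0) :=
      Polynomial.eq_C_of_derivative_eq_zero hderiv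
    have hRe : R.eval (-((((n+2:ℕ)):ℚ) + c)) = 0 := by
      rw [hR, Polynomial.eval_mul, Polynomial.eval_pow, Polynomial.eval_add, Polynomial.eval_X,
        Polynomial.eval_C, Polynomial.eval_C]
      rw [show -((((n+2:ℕ)):ℚ) + c) + ((((n+2:ℕ)):ℚ) + c) = (0:ℚ) from by ring,
        zero_pow (Nat.succ_ne_zero n), mul_zero]
    have hLe : L.eval (-((((n+2:ℕ)):ℚ) + c)) = 0 := by
      rw [hL, Polynomial.eval_finset_sum]
      have e3 : ∀ k ∈ range (n+2),
          Polynomial.eval (-((((n+2:ℕ)):ℚ) + c))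
            (Polynomial.C ((((n+2).choose (k+1) : ℕ) : ℚ) * ((k:ℚ)+1)^k)
              * (Polynomial.X + Polynomial.C (((n+1-k : ℕ) : ℚ) + c))^(n+1-k))
          = (-1:ℚ)^(n+2) * ((-1:ℚ)^(k+1) * (((n+2).choose (k+1) : ℕ) : ℚ) * ((k:ℚ)+1)^(n+1)) := by
        intro k hk
        rw [Finset.mem_range] at hk
        have hk' : k ≤ n+1 := by omega
        have hcast : ((n+1-k : ℕ) : ℚ) = ((n+1 : ℕ) : ℚ) - (k:ℚ) := by
          rw [Nat.cast_sub hk']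
        have hbase : (-((((n+2:ℕ)):ℚ) + c)) + (((n+1-k : ℕ) : ℚ) + c) = -((k:ℚ)+1) := by
          rw [hcast]; push_cast; ring
        rw [Polynomial.eval_mul, Polynomial.eval_pow, Polynomial.eval_add, Polynomial.eval_X,
          Polynomial.eval_C, Polynomial.eval_C, hbase]
        rw [show (-((k:ℚ)+1)) = (-1) * ((k:ℚ)+1) from by ring, mul_pow]
        have hpows : ((k:ℚ)+1)^k * ((k:ℚ)+1)^(n+1-k) = ((k:ℚ)+1)^(n+1) := by
          rw [← pow_add]
          congr 1
          omega
        have hsign : (-1:ℚ)^(n+1-k) = (-1:ℚ)^(n+2) * (-1:ℚ)^(k+1) := by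
          have h1 : (-1:ℚ)^(n+1-k) * (-1:ℚ)^(k+1) = (-1:ℚ)^(n+2) := by
            rw [← pow_add]
            congr 1
            omega
          have h2 : (-1:ℚ)^(k+1) * (-1:ℚ)^(k+1) = 1 := by
            rw [← pow_add]
            exact Even.neg_one_pow ⟨k+1, by ring⟩
          calc (-1:ℚ)^(n+1-k) = (-1:ℚ)^(n+1-k) * ((-1:ℚ)^(k+1) * (-1:ℚ)^(k+1)) := by
                rw [h2, mul_one]
            _ = ((-1:ℚ)^(n+1-k) * (-1:ℚ)^(k+1)) * (-1:ℚ)^(k+1) := by ring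
            _ = (-1:ℚ)^(n+2) * (-1:ℚ)^(k+1) := by rw [h1]
        rw [hsign]
        linear_combination ((((n+2).choose (k+1) : ℕ) : ℚ) * (-1:ℚ)^(n+2) * (-1:ℚ)^(k+1)) * hpows
      rw [Finset.sum_congr rfl e3, ← Finset.mul_sum]
      have hfd := fd (n+2) (Polynomial.X^(n+1)) (Or.inr (by simp [Polynomial.natDegree_X_pow]))
      simp only [Polynomial.eval_pow, Polynomial.eval_X] at hfd
      rw [Finset.sum_range_succ'] at hfd
      simp only [Nat.cast_zero, pow_zero, Nat.choose_zero_right, Nat.cast_one, one_mul, mul_one,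
        zero_pow (Nat.succ_ne_zero n), mul_zero, add_zero] at hfd
      have : ∑ k ∈ range (n+2), (-1:ℚ)^(k+1) * (((n+2).choose (k+1) : ℕ) : ℚ) * ((k:ℚ)+1)^(n+1)
          = 0 := by
        rw [← hfd]
        refine Finset.sum_congr rfl (fun k _ => ?_)
        push_cast
        ring
      rw [this, mul_zero]
    have hc0 : (L - R).coeff 0 = 0 := by
      have := congrArg (Polynomial.eval (-((((n+2:ℕ)):ℚ) + c))) hconst
      rw [Polynomial.eval_sub, hLe, hRe, Polynomial.eval_C, sub_zero] at this
      exact this.symm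
    have : L - R = 0 := by rw [hconst, hc0, map_zero]
    exact sub_eq_zero.mp this

lemma AA (n : ℕ) : ∑ k ∈ range (n+1),
    (((n+1).choose (k+1) : ℕ) : ℚ) * ((k:ℚ)+1)^k * (((n-k : ℕ)):ℚ)^(n-k)
    = (((n+1:ℕ)):ℚ)^(n+1) := by
  have h := congrArg (Polynomial.eval (0:ℚ)) (key' n 0)
  simp only [Polynomial.eval_finset_sum, Polynomial.eval_mul, Polynomial.eval_pow,
    Polynomial.eval_add, Polynomial.eval_X, Polynomial.eval_C, zero_add, add_zero] at h
  rw [h]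
  rw [← pow_succ']
end helpers

open Finset in
/-- The forest-counting identity: `Σ_{n≥1} n^{n-2} x^n / n! = T(x) - T(x)²/2`,
where `T(x) = Σ_{n≥1} n^{n-1} x^n / n!` is the tree function, as formal power
series over `ℚ`. -/
theorem stmt_9
    (T : PowerSeries ℚ)
    (hT : T = PowerSeries.mk fun n => if n = 0 then 0 else (n : ℚ) ^ (n - 1) / n.factorial) :
    (PowerSeries.mk fun n => if n = 0 then 0 else (n : ℚ) ^ (n - 2) / n.factorial) =
      T - T ^ 2 * PowerSeries.C (1 / 2 : ℚ) := by
  set t : ℕ → ℚ := fun n => if n = 0 then 0 else (n : ℚ) ^ (n - 1) / n.factorial with ht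
  ext n
  rw [hT]
  rw [map_sub, PowerSeries.coeff_mk, PowerSeries.coeff_mul_C, pow_two, PowerSeries.coeff_mul]
  rw [Finset.Nat.sum_antidiagonal_eq_sum_range_succ_mk]
  simp only [PowerSeries.coeff_mk]
  -- now a purely scalar statement about t
  match n with
  | 0 => simp [ht]
  | 1 => norm_num [ht, Finset.sum_range_succ]
  | (m+2) =>
    set S : ℚ := ∑ k ∈ range (m+3), t k * t (m+2-k) with hSdef
    have hx : ((m+2:ℕ) : ℚ) ≠ 0 := by positivity
    have hfne : (((m+2).factorial : ℕ) : ℚ) ≠ 0 := by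
      exact_mod_cast (Nat.factorial_ne_zero (m+2))
    -- W2
    set W : ℚ := ∑ k ∈ range (m+3), (((m+2-k : ℕ)):ℚ) * (t k * t (m+2-k)) with hWdef
    have hW1 : ∑ k ∈ range (m+3), ((k:ℕ):ℚ) * (t k * t (m+2-k)) = W := by
      rw [hWdef]
      rw [← Finset.sum_range_reflect (fun k => (((m+2-k : ℕ)):ℚ) * (t k * t (m+2-k))) (m+3)]
      refine Finset.sum_congr rfl (fun k hk => ?_)
      rw [Finset.mem_range] at hk
      have h1 : m+3-1-k = m+2-k := by omega
      have h2 : m+2-(m+2-k) = k := by omega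
      rw [h1, h2]
      ring
    have hMS : ((m+2:ℕ):ℚ) * S = 2 * W := by
      rw [hSdef, Finset.mul_sum, two_mul]
      nth_rewrite 2 [← hW1]
      rw [← Finset.sum_add_distrib]
      refine Finset.sum_congr rfl (fun k hk => ?_)
      rw [Finset.mem_range] at hk
      have : ((k:ℕ):ℚ) + (((m+2-k : ℕ)):ℚ) = ((m+2:ℕ):ℚ) := by
        have : k + (m+2-k) = m+2 := by omega
        exact_mod_cast congrArg (Nat.cast : ℕ → ℚ) this
      rw [← this]
      ring
    -- factorial * W
    have hfW : (((m+2).factorial : ℕ) : ℚ) * W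
        = ((m+2:ℕ):ℚ)^(m+2) - ((m+2:ℕ):ℚ)^(m+1) := by
      have hAA := AA (m+1)
      rw [Finset.sum_range_succ] at hAA
      -- compute the last term
      have hlast2 : (((m+2).choose ((m+1)+1) : ℕ) : ℚ) * ((((m+1:ℕ)):ℚ)+1)^(m+1)
          * ((((m+1) - (m+1) : ℕ)):ℚ)^((m+1)-(m+1)) = ((m+2:ℕ):ℚ)^(m+1) := by
        rw [Nat.sub_self, Nat.choose_self]
        push_cast
        ring
      rw [hlast2] at hAA
      -- peel k=0 and k=m+2 from W
      rw [hWdef, Finset.sum_range_succ', Finset.sum_range_succ]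
      have hz0 : (((m+2-0 : ℕ)):ℚ) * (t 0 * t (m+2-0)) = 0 := by
        simp [ht]
      have hzlast : (((m+2-(m+1+1) : ℕ)):ℚ) * (t (m+1+1) * t (m+2-(m+1+1))) = 0 := by
        simp
      simp only [hz0, hzlast, add_zero, zero_add]
      rw [Finset.mul_sum]
      have hterm : ∀ k ∈ range (m+1),
          (((m+2).factorial : ℕ) : ℚ) * ((((m+2-(k+1) : ℕ)):ℚ) * (t (k+1) * t (m+2-(k+1))))
          = (((m+2).choose (k+1) : ℕ) : ℚ) * ((k:ℚ)+1)^k * ((((m+1)-k : ℕ)):ℚ)^((m+1)-k) := by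
        intro k hk
        rw [Finset.mem_range] at hk
        have hk' : k ≤ m := by omega
        have e1 : m+2-(k+1) = m+1-k := by omega
        have e2 : m+1-k ≠ 0 := by omega
        have e3 : (m+1-k) - 1 = m-k := by omega
        rw [e1, ht]
        simp only [Nat.succ_ne_zero, if_neg, e2, if_neg (Nat.succ_ne_zero k)]
        have e4 : (k+1) - 1 = k := by omega
        rw [e4, e3]
        have hch : (((m+2).choose (k+1) : ℕ) : ℚ)
            = (((m+2).factorial : ℕ) : ℚ) / ((((k+1).factorial : ℕ) : ℚ) * (((m+1-k).factorial : ℕ) : ℚ)) := by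
          have hcc := Nat.cast_choose ℚ (show k+1 ≤ m+2 by omega)
          rw [e1] at hcc
          exact hcc
        have hpow : ((((m+1)-k : ℕ)):ℚ)^((m+1)-k) = (((m+1-k : ℕ)):ℚ) * (((m+1-k : ℕ)):ℚ)^(m-k) := by
          rw [show (m+1)-k = (m-k)+1 by omega, pow_succ]
          ring
        rw [hch, hpow]
        have hne1 : ((((k+1).factorial : ℕ)) : ℚ) ≠ 0 := by exact_mod_cast (Nat.factorial_ne_zero (k+1))
        have hne2 : ((((m+1-k).factorial : ℕ)) : ℚ) ≠ 0 := by exact_mod_cast (Nat.factorial_ne_zero (m+1-k))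
        push_cast
        field_simp
      rw [Finset.sum_congr rfl hterm]
      rw [show m+1+1 = m+2 from by omega] at hAA
      linarith [hAA]
    -- conclude S
    have hfS : (((m+2).factorial : ℕ) : ℚ) * S
        = 2 * (((m+2:ℕ):ℚ)^(m+1) - ((m+2:ℕ):ℚ)^m) := by
      have h1 : ((m+2:ℕ):ℚ) * ((((m+2).factorial : ℕ) : ℚ) * S)
          = ((m+2:ℕ):ℚ) * (2 * (((m+2:ℕ):ℚ)^(m+1) - ((m+2:ℕ):ℚ)^m)) := by
        calc ((m+2:ℕ):ℚ) * ((((m+2).factorial : ℕ) : ℚ) * S)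
            = (((m+2).factorial : ℕ) : ℚ) * (((m+2:ℕ):ℚ) * S) := by ring
          _ = (((m+2).factorial : ℕ) : ℚ) * (2 * W) := by rw [hMS]
          _ = 2 * ((((m+2).factorial : ℕ) : ℚ) * W) := by ring
          _ = 2 * (((m+2:ℕ):ℚ)^(m+2) - ((m+2:ℕ):ℚ)^(m+1)) := by rw [hfW]
          _ = ((m+2:ℕ):ℚ) * (2 * (((m+2:ℕ):ℚ)^(m+1) - ((m+2:ℕ):ℚ)^m)) := by
              rw [show m+2 = (m+1)+1 from rfl, pow_succ, show m+1 = m+1 from rfl]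
              rw [show ((m+2:ℕ):ℚ)^(m+1) = ((m+2:ℕ):ℚ)^m * ((m+2:ℕ):ℚ) from by rw [← pow_succ]]
              ring
      exact mul_left_cancel₀ hx h1
    -- final goal
    have hn0 : (m+2 : ℕ) ≠ 0 := by omega
    simp only [ht, if_neg hn0]
    rw [show (m+2) - 2 = m from by omega, show (m+2) - 1 = m+1 from by omega]
    have : S = 2 * (((m+2:ℕ):ℚ)^(m+1) - ((m+2:ℕ):ℚ)^m) / (((m+2).factorial : ℕ) : ℚ) := by
      field_simp at hfS ⊢
      linarith [hfS]
    rw [this]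
    push_cast
    field_simp
    ring
end

section
/- In the formal power series ring ℚ[[x]], let T = Σ_{n≥1} n^{n-1} x^n/n! (the tree function), which satisfies T = x·exp(T). Then exp(T/2) = Σ_{n≥0} (1/2)(n + 1/2)^{n-1} x^n/n! — equivalently, the power series U = (T/x)^{1/2} (defined as the unique power series with constant term 1 whose square is T/x) satisfies U = Σ_{n≥0} (1/2)(n+1/2)^{n-1} x^n/n!. -/
section AbelAux

open Polynomial Finset

noncomputable def abP (k : ℕ) : Polynomial ℚ :=
  if k = 0 then 1 else X * (X + C (k : ℚ)) ^ (k - 1)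

lemma abP_zero : abP 0 = 1 := rfl

lemma abP_succ (k : ℕ) : abP (k + 1) = X * (X + C ((k : ℚ) + 1)) ^ k := by
  simp [abP]

lemma eval_zero_abP_succ (k : ℕ) : (abP (k + 1)).eval 0 = 0 := by
  simp [abP_succ]

lemma deriv_Ab (k : ℕ) :
    (abP (k + 1)).derivative = ((k : ℚ) + 1) • (abP k).comp (X + 1) := by
  cases k with
  | zero => simp [abP_succ, abP_zero]
  | succ j =>
      rw [abP_succ, abP_succ]
      simp only [derivative_mul, derivative_pow, derivative_add, derivative_X,
        derivative_C, derivative_one, mul_comp, X_comp, pow_comp, add_comp, C_comp,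
        one_comp, smul_eq_C_mul]
      simp only [Nat.cast_add, Nat.cast_one, C_add, C_1, Nat.add_sub_cancel]
      ring

example : True := trivial

lemma poly_eq_of_deriv {p q : Polynomial ℚ} (h : p.derivative = q.derivative)
    (h0 : p.eval 0 = q.eval 0) : p = q := by
  have hd : (p - q).derivative = 0 := by rw [derivative_sub, h, sub_self]
  have hc := Polynomial.eq_C_of_derivative_eq_zero hd
  have h2 : (p - q).coeff 0 = 0 := by
    rw [Polynomial.coeff_zero_eq_eval_zero]; simp [h0]
  have : p - q = 0 := by rw [hc, h2, map_zero]
  linear_combination this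

lemma abKey (m : ℕ) (y : ℚ) :
    ∑ k ∈ range (m + 1), C ((m.choose k : ℚ) * (abP (m - k)).eval y) * abP k
      = (abP m).comp (X + C y) := by
  induction m with
  | zero => simp [abP_zero]
  | succ m ih =>
      apply poly_eq_of_deriv
      · rw [derivative_sum]
        rw [Finset.sum_range_succ']
        simp only [Nat.sub_zero, derivative_mul, derivative_C, zero_mul, zero_add,
          abP_zero, derivative_one, mul_zero, add_zero]
        have : ∀ k, C (((m+1).choose (k+1) : ℚ) * (abP (m + 1 - (k+1))).eval y) *
            (abP (k+1)).derivative
            = ((m : ℚ) + 1) •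
              (C ((m.choose k : ℚ) * (abP (m - k)).eval y) * (abP k).comp (X + 1)) := by
          intro k
          rw [deriv_Ab]
          have hch : ((m+1).choose (k+1) : ℚ) * ((k : ℚ) + 1)
              = ((m : ℚ) + 1) * (m.choose k : ℚ) := by
            have h := (Nat.add_one_mul_choose_eq m k).symm
            exact_mod_cast congrArg (Nat.cast : ℕ → ℚ) h
          simp only [Nat.succ_sub_succ, smul_eq_C_mul]
          rw [← mul_assoc, ← mul_assoc, ← C_mul, ← C_mul]
          congr 1
          congr 1
          linear_combination Polynomial.eval y (abP (m - k)) * hch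
        rw [Finset.sum_congr rfl fun k _ => this k]
        rw [← Finset.smul_sum]
        have hsum : ∑ k ∈ range (m + 1),
            C ((m.choose k : ℚ) * (abP (m - k)).eval y) * (abP k).comp (X + 1)
            = (∑ k ∈ range (m + 1),
                C ((m.choose k : ℚ) * (abP (m - k)).eval y) * abP k).comp (X + 1) := by
          simp [Polynomial.eval₂_finset_sum, Polynomial.mul_comp, Polynomial.C_comp,
            Polynomial.sum_comp]
        rw [hsum, ih, derivative_comp, deriv_Ab, Polynomial.smul_comp,
          Polynomial.comp_assoc, Polynomial.comp_assoc]
        simp only [add_comp, X_comp, C_comp, one_comp, derivative_add,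
          derivative_X, derivative_C, add_zero, one_mul]
        rw [show X + C y + 1 = X + 1 + C y by ring]
      · rw [Finset.sum_range_succ']
        simp only [eval_add, eval_finset_sum, eval_mul, eval_C, abP_zero, eval_one,
          Nat.sub_zero, Nat.choose_zero_right, Nat.cast_one, one_mul, mul_one,
          eval_zero_abP_succ, mul_zero, Finset.sum_const_zero, zero_add, eval_comp,
          eval_X, eval_zero]

lemma abSum (m : ℕ) :
    ∑ k ∈ range (m + 1),
      (m.choose k : ℚ) * (abP (m - k)).eval (1/2) * (abP k).eval (1/2)
      = (abP m).eval 1 := by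
  have h := congrArg (Polynomial.eval (1/2 : ℚ)) (abKey m (1/2))
  rw [Polynomial.eval_finset_sum, Polynomial.eval_comp] at h
  simp only [eval_mul, eval_C, eval_add, eval_X] at h
  norm_num at h
  convert h using 2 with k hk

lemma eval_one_abP (m : ℕ) : (abP (m + 1)).eval 1 = ((m : ℚ) + 2) ^ m := by
  simp [abP_succ]
  ring_nf

lemma sum_sq_coeff (n : ℕ) :
    ∑ k ∈ range (n + 1), ((abP k).eval (1/2) / k.factorial) *
      ((abP (n - k)).eval (1/2) / (n - k).factorial)
      = (abP n).eval 1 / n.factorial := by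
  rw [eq_div_iff (by exact_mod_cast n.factorial_ne_zero : (n.factorial : ℚ) ≠ 0)]
  rw [Finset.sum_mul, ← abSum n]
  apply Finset.sum_congr rfl
  intro k hk
  have hkn : k ≤ n := by
    have := Finset.mem_range.mp hk; omega
  have hf : (n.factorial : ℚ)
      = (n.choose k : ℚ) * k.factorial * (n - k).factorial := by
    exact_mod_cast (Nat.choose_mul_factorial_mul_factorial hkn).symm
  have h1 : (k.factorial : ℚ) ≠ 0 := by exact_mod_cast k.factorial_ne_zero
  have h2 : ((n - k).factorial : ℚ) ≠ 0 := by exact_mod_cast (n - k).factorial_ne_zero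
  field_simp
  rw [hf]
  ring

lemma s_eq (n : ℕ) :
    (1/2 : ℚ) * ((n : ℚ) + 1/2) ^ ((n : ℤ) - 1) / n.factorial
      = (abP n).eval (1/2) / n.factorial := by
  cases n with
  | zero => norm_num [abP_zero]
  | succ k =>
      have he : ((k + 1 : ℕ) : ℤ) - 1 = (k : ℤ) := by push_cast; ring
      rw [he, zpow_natCast]
      congr 1
      simp [abP_succ]
      ring_nf

end AbelAux

open PowerSeries

/-- Let `T` be the tree function and `S = Σ_{n≥0} (1/2)(n+1/2)^{n-1} x^n/n!`. Then `S`
is the unique power series with constant term `1` whose square is `T/x`, i.e.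
`S` has constant coefficient `1` and `x·S² = T`.  (Equivalently `S = exp(T/2)`.) -/
theorem stmt_17
    (T : PowerSeries ℚ)
    (hT : T = PowerSeries.mk fun n => if n = 0 then 0 else (n : ℚ) ^ (n - 1) / n.factorial)
    (S : PowerSeries ℚ)
    (hS : S = PowerSeries.mk fun n =>
      (1 / 2) * ((n : ℚ) + 1 / 2) ^ ((n : ℤ) - 1) / n.factorial) :
    PowerSeries.constantCoeff S = 1 ∧ PowerSeries.X * S ^ 2 = T := by
  constructor
  · rw [hS, PowerSeries.constantCoeff_mk]
    norm_num
  · rw [hS, hT]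
    ext n
    cases n with
    | zero =>
        rw [PowerSeries.coeff_zero_eq_constantCoeff]
        simp
    | succ n =>
        rw [sq, PowerSeries.coeff_succ_X_mul, PowerSeries.coeff_mul,
          Finset.Nat.sum_antidiagonal_eq_sum_range_succ_mk]
        simp only [PowerSeries.coeff_mk, Nat.succ_ne_zero, if_false]
        have hterm : ∀ k ∈ Finset.range (n + 1),
            ((1/2 : ℚ) * ((k : ℚ) + 1/2) ^ ((k : ℤ) - 1) / k.factorial) *
            ((1/2 : ℚ) * (((n - k : ℕ) : ℚ) + 1/2) ^ (((n - k : ℕ) : ℤ) - 1) / (n - k).factorial)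
            = ((abP k).eval (1/2) / k.factorial) *
              ((abP (n - k)).eval (1/2) / (n - k).factorial) := by
          intro k _
          rw [s_eq, s_eq]
        rw [Finset.sum_congr rfl hterm, sum_sq_coeff]
        cases n with
        | zero => norm_num [abP_zero]
        | succ m =>
            rw [eval_one_abP]
            have h1 : ((m + 1 + 1 : ℕ).factorial : ℚ)
                = ((m : ℚ) + 2) * ((m + 1).factorial : ℚ) := by
              rw [Nat.factorial_succ]; push_cast; ring
            have h2 : ((m + 1).factorial : ℚ) ≠ 0 := by
              exact_mod_cast (m + 1).factorial_ne_zero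
            have h3 : ((m : ℚ) + 2) ≠ 0 := by positivity
            rw [h1]
            field_simp
            ring_nf
            rw [show 2 + m - 1 = m + 1 by omega]
            push_cast
            ring
end
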